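/- arXiv:1107.4257 — 2 statements merged into one kernel-verified Lean document; each statement's English description precedes it below -/
import Mathlib

section
/- For 0 < ϑ ≤ π/2, the equation sin(s) = s·sin(ϑ)/ϑ has exactly the three real solutions s = 0, s = ϑ, and s = -ϑ. -/
open Real

lemma key_pos (ϑ : ℝ) (h0 : 0 < ϑ) (hπ : ϑ ≤ Real.pi / 2) (s : ℝ) (hs : 0 < s)
    (heq : Real.sin s = s * Real.sin ϑ / ϑ) : s = ϑ := by
  have hpi : (0:ℝ) < Real.pi := Real.pi_pos
  have hϑπ : ϑ < Real.pi := lt_of_le_of_lt hπ (by linarith)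
  have hjordan : 2 / Real.pi * ϑ ≤ Real.sin ϑ := Real.mul_le_sin h0.le hπ
  by_contra hne
  rcases le_or_gt s Real.pi with hsle | hsgt
  · rcases lt_or_gt_of_ne hne with hlt | hgt
    · -- 0 < s < ϑ : strict concavity at 0, ϑ
      have := strictConcaveOn_sin_Icc.2
        ⟨le_rfl, hpi.le⟩ ⟨h0.le, hϑπ.le⟩ (by positivity : (0:ℝ) < ϑ).ne
        (show (0:ℝ) < 1 - s / ϑ by
          have : s / ϑ < 1 := (div_lt_one h0).2 hlt; linarith)
        (show (0:ℝ) < s / ϑ by positivity) (by ring)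
      simp only [smul_eq_mul, mul_zero, Real.sin_zero, zero_add] at this
      rw [show s / ϑ * ϑ = s by field_simp, heq] at this
      rw [div_eq_mul_inv, div_eq_mul_inv] at this
      nlinarith
    · -- ϑ < s ≤ π
      have := strictConcaveOn_sin_Icc.2
        ⟨le_rfl, hpi.le⟩ ⟨hs.le, hsle⟩ (by positivity : (0:ℝ) < s).ne
        (show (0:ℝ) < 1 - ϑ / s by
          have : ϑ / s < 1 := (div_lt_one hs).2 hgt; linarith)
        (show (0:ℝ) < ϑ / s by positivity) (by ring)
      simp only [smul_eq_mul, mul_zero, Real.sin_zero, zero_add] at this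
      rw [show ϑ / s * s = ϑ by field_simp, heq,
        show ϑ / s * (s * Real.sin ϑ / ϑ) = Real.sin ϑ by
          field_simp] at this
      exact lt_irrefl _ this
  · -- s > π : RHS > 1
    have h1 : Real.sin s ≤ 1 := Real.sin_le_one s
    have h2 : 2 / Real.pi * ϑ > 0 := by positivity
    have h3 : s * Real.sin ϑ / ϑ ≥ s * (2 / Real.pi * ϑ) / ϑ := by
      gcongr
    have h4 : s * (2 / Real.pi * ϑ) / ϑ = s * 2 / Real.pi := by field_simp
    have h5 : s * 2 / Real.pi > 2 := by
      rw [gt_iff_lt, lt_div_iff₀ hpi]; nlinarith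
    nlinarith [h3, heq]

theorem sine_equation_solutions (ϑ : ℝ) (h0 : 0 < ϑ) (hπ : ϑ ≤ Real.pi / 2) :
    {s : ℝ | Real.sin s = s * Real.sin ϑ / ϑ} = {0, ϑ, -ϑ} := by
  ext s
  simp only [Set.mem_setOf_eq, Set.mem_insert_iff, Set.mem_singleton_iff]
  constructor
  · intro hs
    rcases lt_trichotomy s 0 with hneg | rfl | hpos
    · right; right
      have : -s = ϑ := key_pos ϑ h0 hπ (-s) (by linarith)
        (by rw [Real.sin_neg, hs]; ring)
      linarith
    · left; rfl
    · right; left; exact key_pos ϑ h0 hπ s hpos hs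
  · rintro (rfl | rfl | rfl)
    · simp
    · field_simp
    · rw [Real.sin_neg]; field_simp
end

section
/- Let 0 < ϑ < π. If a is a finite trigonometric polynomial (or an L² function on the circle) satisfying χ_{[-ϑ,ϑ]} ∗ a = 2 sin(ϑ) a, then a(φ) = c₋₁ e^{-iφ} + c₁ e^{iφ} for some constants c₋₁, c₁ ∈ ℂ. -/
private lemma int_exp_zero' (m : ℤ) (hm : m ≠ 0) :
    (∫ φ : ℝ in (0:ℝ)..(2*Real.pi), Complex.exp (Complex.I * m * φ)) = 0 := by
  have hc : (Complex.I * m : ℂ) ≠ 0 := by simp [Complex.I_ne_zero, hm]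
  rw [integral_exp_mul_complex hc]
  have h1 : Complex.I * (m:ℂ) * ((2*Real.pi : ℝ) : ℂ) = (m : ℂ) * (2 * Real.pi * Complex.I) := by
    push_cast; ring
  rw [h1, Complex.exp_int_mul_two_pi_mul_I]
  simp

private lemma extraction' (s : Finset ℤ) (d : ℤ → ℂ)
    (h : ∀ φ : ℝ, ∑ j ∈ s, d j * Complex.exp (Complex.I * j * φ) = 0) :
    ∀ k ∈ s, d k = 0 := by
  intro k hk
  have hInt : ∀ j : ℤ, IntervalIntegrable (fun φ : ℝ => d j * Complex.exp (Complex.I * (j - k) * φ))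
      MeasureTheory.volume 0 (2*Real.pi) := by
    intro j
    apply Continuous.intervalIntegrable
    fun_prop
  have key : (∫ φ : ℝ in (0:ℝ)..(2*Real.pi),
      ∑ j ∈ s, d j * Complex.exp (Complex.I * (j - k) * φ)) = 0 := by
    have hz : ∀ φ : ℝ, (∑ j ∈ s, d j * Complex.exp (Complex.I * (j - k) * φ)) = 0 := by
      intro φ
      have hprod : ∀ j : ℤ, Complex.exp (Complex.I * (j - k) * φ)
          = Complex.exp (Complex.I * j * φ) * Complex.exp (Complex.I * (-k) * φ) := by
        intro j
        rw [← Complex.exp_add]; congr 1; ring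
      calc ∑ j ∈ s, d j * Complex.exp (Complex.I * (j - k) * φ)
          = (∑ j ∈ s, d j * Complex.exp (Complex.I * j * φ)) * Complex.exp (Complex.I * (-k) * φ) := by
            rw [Finset.sum_mul]
            exact Finset.sum_congr rfl fun j _ => by rw [hprod j]; ring
        _ = 0 := by rw [h φ, zero_mul]
    simp [hz]
  rw [intervalIntegral.integral_finset_sum (fun j _ => hInt j)] at key
  have key2 : ∀ j ∈ s, (∫ φ : ℝ in (0:ℝ)..(2*Real.pi), d j * Complex.exp (Complex.I * (j - k) * φ))
      = if j = k then d j * (2*Real.pi : ℝ) else 0 := by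
    intro j _
    rw [intervalIntegral.integral_const_mul]
    by_cases hjk : j = k
    · subst hjk
      simp
    · rw [show ((j:ℂ) - k) = ((j - k : ℤ) : ℂ) by push_cast; ring]
      rw [int_exp_zero' (j - k) (sub_ne_zero.mpr (by exact_mod_cast hjk))]
      simp [hjk]
  rw [Finset.sum_congr rfl key2, Finset.sum_ite_eq' s k] at key
  simp [hk] at key
  exact key

private lemma abs_sin_nat_lt' (x : ℝ) (hx0 : 0 < x) (hxπ : x < Real.pi) :
    ∀ n : ℕ, 2 ≤ n → |Real.sin (n * x)| < n * Real.sin x := by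
  have hs : 0 < Real.sin x := Real.sin_pos_of_pos_of_lt_pi hx0 hxπ
  have hcos : |Real.cos x| < 1 := by
    have h1 := Real.sin_sq_add_cos_sq x
    have : (Real.cos x)^2 < 1 := by nlinarith
    nlinarith [abs_nonneg (Real.cos x), sq_abs (Real.cos x)]
  intro n hn
  induction n with
  | zero => omega
  | succ m ih =>
    rcases Nat.lt_or_ge m 2 with hm | hm
    · interval_cases m
      · omega
      · have : Real.sin (2 * x) = 2 * Real.sin x * Real.cos x := by
          rw [Real.sin_two_mul]
        push_cast
        rw [this, abs_mul, abs_of_pos (by positivity : (0:ℝ) < 2 * Real.sin x)]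
        nlinarith
    · have hih := ih hm
      have hadd : Real.sin ((m + 1 : ℕ) * x) = Real.sin (m * x) * Real.cos x + Real.cos (m * x) * Real.sin x := by
        push_cast
        rw [show ((m : ℝ) + 1) * x = m * x + x by ring, Real.sin_add]
      calc |Real.sin ((m + 1 : ℕ) * x)| ≤ |Real.sin (m * x)| * |Real.cos x| + |Real.cos (m * x)| * Real.sin x := by
            rw [hadd]
            refine (abs_add_le _ _).trans ?_
            rw [abs_mul, abs_mul, abs_of_pos hs]
        _ < m * Real.sin x + 1 * Real.sin x := by
            have h1 : |Real.sin (m * x)| * |Real.cos x| ≤ |Real.sin (m * x)| := by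
              nlinarith [abs_nonneg (Real.sin (m * x))]
            have h2 : |Real.cos (m * x)| ≤ 1 := Real.abs_cos_le_one _
            nlinarith [abs_nonneg (Real.sin (m*x)), abs_nonneg (Real.cos (m*x))]
        _ = (m + 1 : ℕ) * Real.sin x := by push_cast; ring

private lemma sin_ne_int_mul' (x : ℝ) (hx0 : 0 < x) (hxπ : x < Real.pi)
    (j : ℤ) (hj : 2 ≤ |j|) : Real.sin (j * x) ≠ j * Real.sin x := by
  have hs : 0 < Real.sin x := Real.sin_pos_of_pos_of_lt_pi hx0 hxπ
  intro heq
  have hj2 : 2 ≤ j.natAbs := by rw [Int.abs_eq_natAbs] at hj; exact_mod_cast hj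
  have hlt : |Real.sin ((j.natAbs : ℕ) * x)| < (j.natAbs : ℕ) * Real.sin x :=
    abs_sin_nat_lt' x hx0 hxπ j.natAbs hj2
  have hcast : (j:ℝ) = (j.natAbs:ℝ) ∨ (j:ℝ) = -(j.natAbs:ℝ) := by
    rcases Int.natAbs_eq j with h | h
    · left; rw [Nat.cast_natAbs]; exact_mod_cast h
    · right; rw [Nat.cast_natAbs]; exact_mod_cast h
  have habs : |Real.sin (j * x)| = |Real.sin ((j.natAbs : ℕ) * x)| := by
    rcases hcast with h | h
    · rw [h]
    · rw [h, neg_mul, Real.sin_neg, abs_neg]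
  have habs2 : |(j : ℝ) * Real.sin x| = (j.natAbs : ℝ) * Real.sin x := by
    rcases hcast with h | h <;> rw [h, abs_mul, abs_of_pos hs] <;>
      simp [Nat.abs_cast]
  rw [heq] at habs
  rw [habs2] at habs
  rw [habs] at hlt
  exact lt_irrefl _ hlt

private lemma conv_int' (ϑ φ : ℝ) (j : ℤ) (hj : j ≠ 0) :
    (∫ ψ in (φ-ϑ)..(φ+ϑ), Complex.exp (Complex.I * j * ψ))
      = ((2*Real.sin (j*ϑ)/j : ℝ) : ℂ) * Complex.exp (Complex.I * j * φ) := by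
  have hc : (Complex.I * j : ℂ) ≠ 0 := by simp [Complex.I_ne_zero, hj]
  have hcj : ((j:ℂ)) ≠ 0 := by exact_mod_cast hj
  rw [integral_exp_mul_complex hc]
  have hsin : Complex.exp (Complex.I * j * ϑ) - Complex.exp (-(Complex.I * j * ϑ))
      = 2 * Complex.I * Complex.sin ((j:ℂ) * ϑ) := by
    rw [Complex.sin]
    have e1 : -((j:ℂ)*ϑ)*Complex.I = -(Complex.I*(j:ℂ)*ϑ) := by ring
    have e2 : ((j:ℂ)*ϑ)*Complex.I = Complex.I*(j:ℂ)*ϑ := by ring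
    rw [e1, e2]
    linear_combination (Complex.exp (Complex.I*(j:ℂ)*ϑ) - Complex.exp (-(Complex.I*(j:ℂ)*ϑ))) * Complex.I_sq
  have h1 : Complex.exp (Complex.I*j*((φ+ϑ:ℝ):ℂ)) = Complex.exp (Complex.I*j*φ) * Complex.exp (Complex.I*j*ϑ) := by
    rw [← Complex.exp_add]; congr 1; push_cast; ring
  have h2 : Complex.exp (Complex.I*j*((φ-ϑ:ℝ):ℂ)) = Complex.exp (Complex.I*j*φ) * Complex.exp (-(Complex.I*j*ϑ)) := by
    rw [← Complex.exp_add]; congr 1; push_cast; ring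
  rw [h1, h2, div_eq_iff hc]
  have hr : ((2*Real.sin (j*ϑ)/j : ℝ) : ℂ) = 2 * Complex.sin ((j:ℂ)*ϑ) / j := by
    push_cast [Complex.ofReal_sin]
    ring
  rw [hr]
  field_simp
  linear_combination hsin

theorem kernel_characterization (ϑ : ℝ) (h0 : 0 < ϑ) (hϑ : ϑ < Real.pi)
    (N : ℕ) (c : ℤ → ℂ) (a : ℝ → ℂ)
    (ha : ∀ φ : ℝ, a φ = ∑ j ∈ Finset.Icc (-(N : ℤ)) (N : ℤ), c j * Complex.exp (Complex.I * j * φ))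
    (heq : ∀ φ : ℝ, (∫ ψ in (φ - ϑ)..(φ + ϑ), a ψ) = 2 * Real.sin ϑ * a φ) :
    ∃ cm cp : ℂ, ∀ φ : ℝ,
      a φ = cm * Complex.exp (-Complex.I * φ) + cp * Complex.exp (Complex.I * φ) := by
  set M : ℕ := N + 1 with hM
  set c' : ℤ → ℂ := fun j => if j ∈ Finset.Icc (-(N : ℤ)) (N : ℤ) then c j else 0 with hc'
  have hsub : Finset.Icc (-(N : ℤ)) (N : ℤ) ⊆ Finset.Icc (-(M : ℤ)) (M : ℤ) := by
    apply Finset.Icc_subset_Icc <;> push_cast <;> omega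
  have ha' : ∀ φ : ℝ, a φ = ∑ j ∈ Finset.Icc (-(M : ℤ)) (M : ℤ), c' j * Complex.exp (Complex.I * j * φ) := by
    intro φ
    rw [ha φ, ← Finset.sum_subset hsub (fun j _ hj => by simp only [hc']; rw [if_neg hj, zero_mul])]
    exact Finset.sum_congr rfl fun j hj => by simp only [hc']; rw [if_pos hj]
  set μ : ℤ → ℝ := fun j => if j = 0 then 2*ϑ else 2*Real.sin (j*ϑ)/j with hμ
  have hconv : ∀ (j : ℤ) (φ : ℝ), (∫ ψ in (φ-ϑ)..(φ+ϑ), Complex.exp (Complex.I * j * ψ))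
      = ((μ j : ℝ) : ℂ) * Complex.exp (Complex.I * j * φ) := by
    intro j φ
    by_cases hj : j = 0
    · subst hj
      simp [hμ]
      push_cast
      ring
    · rw [conv_int' ϑ φ j hj]
      simp [hμ, hj]
  have hIntegral : ∀ φ : ℝ, (∫ ψ in (φ-ϑ)..(φ+ϑ), a ψ)
      = ∑ j ∈ Finset.Icc (-(M : ℤ)) (M : ℤ), c' j * (((μ j : ℝ) : ℂ) * Complex.exp (Complex.I * j * φ)) := by
    intro φ
    have : (∫ ψ in (φ-ϑ)..(φ+ϑ), a ψ)
        = ∫ ψ in (φ-ϑ)..(φ+ϑ), ∑ j ∈ Finset.Icc (-(M : ℤ)) (M : ℤ), c' j * Complex.exp (Complex.I * j * ψ) := by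
      congr 1; funext ψ; exact ha' ψ
    rw [this, intervalIntegral.integral_finset_sum]
    · refine Finset.sum_congr rfl fun j _ => ?_
      rw [intervalIntegral.integral_const_mul, hconv j φ]
    · intro j _
      apply Continuous.intervalIntegrable
      fun_prop
  set d : ℤ → ℂ := fun j => c' j * (((μ j : ℝ) : ℂ) - (2 * Real.sin ϑ : ℝ)) with hd
  have hzero : ∀ φ : ℝ, ∑ j ∈ Finset.Icc (-(M : ℤ)) (M : ℤ), d j * Complex.exp (Complex.I * j * φ) = 0 := by
    intro φ
    have h1 := heq φ
    rw [hIntegral φ, ha' φ, Finset.mul_sum] at h1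
    rw [← sub_eq_zero] at h1
    rw [← h1, ← Finset.sum_sub_distrib]
    refine Finset.sum_congr rfl fun j _ => ?_
    simp only [hd]
    push_cast
    ring
  have hdzero := extraction' _ d hzero
  have hczero : ∀ j ∈ Finset.Icc (-(M : ℤ)) (M : ℤ), j ≠ -1 → j ≠ 1 → c' j = 0 := by
    intro j hj hjm hjp
    have hdj := hdzero j hj
    have hμne : μ j ≠ 2 * Real.sin ϑ := by
      by_cases hj0 : j = 0
      · subst hj0
        simp only [hμ, if_pos rfl]
        have := Real.sin_lt h0
        intro hcon; nlinarith
      · simp only [hμ, if_neg hj0]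
        intro hcon
        have hj2 : 2 ≤ |j| := by
          rcases le_or_gt 0 j with h | h
          · rw [abs_of_nonneg h]; omega
          · rw [abs_of_neg h]; omega
        have hjr : ((j:ℝ)) ≠ 0 := by exact_mod_cast hj0
        apply sin_ne_int_mul' ϑ h0 hϑ j hj2
        field_simp at hcon
        linarith [hcon]
      
    have : (((μ j : ℝ) : ℂ) - ((2 * Real.sin ϑ : ℝ) : ℂ)) ≠ 0 := by
      rw [sub_ne_zero]
      exact_mod_cast hμne
    rcases mul_eq_zero.mp hdj with h | h
    · exact h
    · exact absurd h this
  refine ⟨c' (-1), c' 1, fun φ => ?_⟩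
  rw [ha' φ]
  have hpairsub : ({-1, 1} : Finset ℤ) ⊆ Finset.Icc (-(M : ℤ)) (M : ℤ) := by
    intro x hx
    simp only [Finset.mem_insert, Finset.mem_singleton] at hx
    rcases hx with h | h <;> subst h <;> simp [Finset.mem_Icc, hM] <;> push_cast <;> omega
  rw [← Finset.sum_subset hpairsub]
  · rw [Finset.sum_pair (by decide : (-1 : ℤ) ≠ 1)]
    congr 2
    · congr 1; push_cast; ring
    · congr 1; push_cast; ring
  · intro j hj hjn
    simp only [Finset.mem_insert, Finset.mem_singleton] at hjn
    push_neg at hjn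
    rw [hczero j hj hjn.1 hjn.2, zero_mul]
end
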